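/- Farkas separation direction of Gale duality: Let V be a linear subspace of ℝⁿ, let t ∈ ℝⁿ, and let α : Fin n → Bool be a sign vector with associated closed orthant O_α. If the chamber (t + V) ∩ O_α is empty, then there exists y ∈ V^⊥ ∩ O_α with ⟨t, y⟩ < 0. -/

import Mathlib

open scoped RealInnerProductSpace

/-- The closed orthant associated to a sign vector `α : Fin n → Bool`. -/
def orthant {n : ℕ} (α : Fin n → Bool) : Set (EuclideanSpace ℝ (Fin n)) :=
  {x | ∀ i, (α i = true → 0 ≤ x i) ∧ (α i = false → x i ≤ 0)}

/-- The chamber `(t + V) ∩ O_α` of the coordinate hyperplane arrangement restricted to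
the affine subspace `t + V`. -/
def chamber {n : ℕ} (V : Submodule ℝ (EuclideanSpace ℝ (Fin n)))
    (t : EuclideanSpace ℝ (Fin n)) (α : Fin n → Bool) : Set (EuclideanSpace ℝ (Fin n)) :=
  ((fun v => t + v) '' (V : Set (EuclideanSpace ℝ (Fin n)))) ∩ orthant α

section AuxCone
variable {E : Type*} [NormedAddCommGroup E] [NormedSpace ℝ E] [FiniteDimensional ℝ E]
variable {ι : Type*} [Fintype ι] [DecidableEq ι]

/-- The cone of nonnegative combinations of `v i`, `i ∈ s`. -/
def coneOn (v : ι → E) (s : Finset ι) : Set E :=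
  {x | ∃ c : ι → ℝ, (∀ i, 0 ≤ c i) ∧ ∑ i ∈ s, c i • v i = x}

theorem isClosed_coneOn (v : ι → E) (s : Finset ι) : IsClosed (coneOn v s) := by
  induction s using Finset.strongInduction with
  | _ s IH =>
  by_cases hli : LinearIndependent ℝ (fun i : {i // i ∈ s} => v i)
  · -- linearly independent: closed embedding of the nonneg orthant
    let f : ({i // i ∈ s} → ℝ) →ₗ[ℝ] E :=
      { toFun := fun c => ∑ i : {i // i ∈ s}, c i • v i
        map_add' := by intro a b; simp [add_smul, Finset.sum_add_distrib]
        map_smul' := by intro m a; simp [smul_smul, Finset.smul_sum]}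
    have hker : LinearMap.ker f = ⊥ := by
      rw [LinearMap.ker_eq_bot']
      intro g hg
      funext i
      exact Fintype.linearIndependent_iff.mp hli g hg i
    have hemb := LinearMap.isClosedEmbedding_of_injective hker
    have himg : coneOn v s = f '' {c : {i // i ∈ s} → ℝ | ∀ i, 0 ≤ c i} := by
      ext x
      constructor
      · rintro ⟨c, hc, rfl⟩
        refine ⟨fun i => c i, fun i => hc i, ?_⟩
        show ∑ i : {i // i ∈ s}, c i • v i = _
        rw [Finset.sum_coe_sort s (fun i => c i • v i)]
      · rintro ⟨c, hc, rfl⟩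
        refine ⟨fun i => if h : i ∈ s then c ⟨i, h⟩ else 0, ?_, ?_⟩
        · intro i; dsimp; split
          · exact hc _
          · exact le_refl _
        · show _ = ∑ i : {i // i ∈ s}, c i • v i
          rw [← Finset.sum_coe_sort s (fun i => (if h : i ∈ s then c ⟨i, h⟩ else 0) • v i)]
          refine Finset.sum_congr rfl ?_
          rintro ⟨i, hi⟩ _
          simp [hi]
    rw [himg]
    refine hemb.isClosedMap _ ?_
    have : {c : {i // i ∈ s} → ℝ | ∀ i, 0 ≤ c i} = ⋂ i, {c | 0 ≤ c i} := by
      ext c; simp [Set.mem_iInter]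
    rw [this]
    exact isClosed_iInter fun i => isClosed_le continuous_const (continuous_apply i)
  · -- dependent: the cone is a finite union of cones on smaller sets
    obtain ⟨g, hgsum, i0, hgi0⟩ := Fintype.not_linearIndependent_iff.mp hli
    -- make a relation with a positive coefficient, extended to ι
    obtain ⟨g, hgsum, i0, hgi0⟩ :
        ∃ g : {i // i ∈ s} → ℝ, ∑ i, g i • v i = 0 ∧ ∃ i0, 0 < g i0 := by
      rcases lt_or_gt_of_ne hgi0 with hneg | hpos
      · refine ⟨-g, ?_, i0, by simpa using hneg⟩
        have : ∑ i : {i // i ∈ s}, (-g) i • v (i : ι)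
            = -∑ i : {i // i ∈ s}, g i • v (i : ι) := by
          simp [neg_smul]
        rw [this, hgsum, neg_zero]
      · exact ⟨g, hgsum, i0, hpos⟩
    set G : ι → ℝ := fun i => if h : i ∈ s then g ⟨i, h⟩ else 0 with hG
    have hGsum : ∑ i ∈ s, G i • v i = 0 := by
      rw [← Finset.sum_coe_sort s (fun i => G i • v i)]
      rw [← hgsum]
      refine Finset.sum_congr rfl ?_
      rintro ⟨i, hi⟩ _
      simp [hG, hi]
    have hunion : coneOn v s = ⋃ i ∈ s, coneOn v (s.erase i) := by
      ext x
      simp only [Set.mem_iUnion]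
      constructor
      · rintro ⟨c, hc, rfl⟩
        set T : Finset ι := s.filter (fun i => 0 < G i) with hT
        have hTne : T.Nonempty := ⟨i0, by simp [hT, hG, i0.2, hgi0]⟩
        obtain ⟨i1, hi1T, hinf⟩ := Finset.exists_mem_eq_inf' hTne (fun i => c i / G i)
        set lam : ℝ := T.inf' hTne (fun i => c i / G i) with hlam
        have hi1s : i1 ∈ s := (Finset.mem_filter.mp hi1T).1
        have hGi1 : 0 < G i1 := (Finset.mem_filter.mp hi1T).2
        have hlam0 : 0 ≤ lam := by
          rw [hinf]; exact div_nonneg (hc i1) hGi1.le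
        set c' : ι → ℝ := fun i => c i - lam * G i with hc'
        have hc'nonneg : ∀ i, 0 ≤ c' i := by
          intro i
          by_cases his : i ∈ s
          · by_cases hGi : 0 < G i
            · have hiT : i ∈ T := Finset.mem_filter.mpr ⟨his, hGi⟩
              have := Finset.inf'_le (fun i => c i / G i) hiT
              rw [← hlam] at this
              simp only [hc', sub_nonneg]
              calc lam * G i ≤ (c i / G i) * G i := by
                    exact mul_le_mul_of_nonneg_right (Finset.inf'_le _ hiT) hGi.le
                _ = c i := div_mul_cancel₀ _ hGi.ne'
            · push_neg at hGi
              have : lam * G i ≤ 0 := mul_nonpos_of_nonneg_of_nonpos hlam0 hGi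
              simp only [hc', sub_nonneg]
              exact this.trans (hc i)
          · simp [hc', hG, his, hc i]
        have hc'i1 : c' i1 = 0 := by
          simp only [hc', hinf, div_mul_cancel₀ _ hGi1.ne', sub_self]
        refine ⟨i1, hi1s, c', hc'nonneg, ?_⟩
        have : ∑ i ∈ s.erase i1, c' i • v i = ∑ i ∈ s, c' i • v i := by
          rw [← Finset.sum_erase_add s _ hi1s, hc'i1]
          simp
        rw [this]
        simp only [hc', sub_smul, Finset.sum_sub_distrib, mul_smul]
        rw [← Finset.smul_sum, hGsum, smul_zero, sub_zero]
      · rintro ⟨i, his, c, hc, rfl⟩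
        refine ⟨Function.update c i 0, ?_, ?_⟩
        · intro j
          rcases eq_or_ne j i with rfl | hji
          · simp
          · simp [Function.update_of_ne hji, hc j]
        · rw [← Finset.sum_erase_add s _ his]
          simp only [Function.update_self, zero_smul, add_zero]
          refine Finset.sum_congr rfl ?_
          intro j hj
          rw [Function.update_of_ne (Finset.ne_of_mem_erase hj)]
    rw [hunion]
    exact isClosed_biUnion_finset fun i hi => IH _ (Finset.erase_ssubset hi)
end AuxCone

/-- Farkas separation direction of Gale duality: if the chamber `(t + V) ∩ O_α` is empty,
then there exists `y ∈ V^⊥ ∩ O_α` with `⟨t, y⟩ < 0`. -/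
theorem gale_duality_farkas_separation {n : ℕ}
    (V : Submodule ℝ (EuclideanSpace ℝ (Fin n)))
    (t : EuclideanSpace ℝ (Fin n)) (α : Fin n → Bool)
    (h : chamber V t α = ∅) :
    ∃ y ∈ (Vᗮ : Set (EuclideanSpace ℝ (Fin n))) ∩ orthant α, ⟪t, y⟫ < 0 := by
  classical
  set σ : Fin n → ℝ := fun i => if α i then 1 else -1 with hσ
  have hσsq : ∀ i, σ i * σ i = 1 := by
    intro i; by_cases hi : α i <;> simp [hσ, hi]
  -- orthant is closed under addition and nonneg scaling, and contains 0
  have horth0 : (0 : EuclideanSpace ℝ (Fin n)) ∈ orthant α := by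
    intro i; constructor <;> intro _ <;> simp
  have horth_add : ∀ a b : EuclideanSpace ℝ (Fin n), a ∈ orthant α → b ∈ orthant α → a + b ∈ orthant α := by
    intro a b ha hb i
    constructor <;> intro hi
    · have h1 := (ha i).1 hi; have h2 := (hb i).1 hi
      simpa [PiLp.add_apply] using add_nonneg h1 h2
    · have h1 := (ha i).2 hi; have h2 := (hb i).2 hi
      simpa [PiLp.add_apply] using add_nonpos h1 h2
  have horth_smul : ∀ (c : ℝ) (a : EuclideanSpace ℝ (Fin n)), 0 ≤ c → a ∈ orthant α → c • a ∈ orthant α := by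
    intro c a hc ha i
    constructor <;> intro hi
    · have := (ha i).1 hi
      simpa [PiLp.smul_apply, smul_eq_mul] using mul_nonneg hc this
    · have := (ha i).2 hi
      simpa [PiLp.smul_apply, smul_eq_mul] using mul_nonpos_of_nonneg_of_nonpos hc this
  -- the cone C = orthant + V
  set C : Set (EuclideanSpace ℝ (Fin n)) := {x | ∃ o ∈ orthant α, ∃ w ∈ (V : Set (EuclideanSpace ℝ (Fin n))), x = o + w} with hC
  -- C is a convex cone
  set K : ConvexCone ℝ (EuclideanSpace ℝ (Fin n)) :=
    { carrier := C
      smul_mem' := by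
        rintro c hc x ⟨o, ho, w, hw, rfl⟩
        exact ⟨c • o, horth_smul c o hc.le ho, c • w, V.smul_mem c hw, by rw [smul_add]⟩
      add_mem' := by
        rintro x ⟨o1, ho1, w1, hw1, rfl⟩ y ⟨o2, ho2, w2, hw2, rfl⟩
        exact ⟨o1 + o2, horth_add _ _ ho1 ho2, w1 + w2, V.add_mem hw1 hw2, by abel⟩ } with hK
  -- C is closed: it is a finitely generated cone
  set m := Module.finrank ℝ V with hm
  set b : Module.Basis (Fin m) ℝ V := Module.finBasis ℝ V with hb
  set w : (Fin n ⊕ (Fin m ⊕ Fin m)) → EuclideanSpace ℝ (Fin n) := fun j =>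
    Sum.elim (fun i => EuclideanSpace.single i (σ i))
      (Sum.elim (fun j => ((b j : EuclideanSpace ℝ (Fin n)))) (fun j => -((b j : EuclideanSpace ℝ (Fin n))))) j with hw
  have hsingle_mem : ∀ i : Fin n,
      (EuclideanSpace.single i (σ i) : EuclideanSpace ℝ (Fin n)) ∈ orthant α := by
    intro i k
    rcases eq_or_ne k i with rfl | hki
    · constructor <;> intro hk <;> simp [EuclideanSpace.single_apply, hσ, hk]
    · constructor <;> intro hk <;> simp [EuclideanSpace.single_apply, hki]
  have hCcone : C = coneOn w Finset.univ := by
    ext x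
    constructor
    · rintro ⟨o, ho, u, hu, rfl⟩
      set r : Fin m → ℝ := fun j => b.repr ⟨u, hu⟩ j with hr
      refine ⟨Sum.elim (fun i => σ i * o i)
        (Sum.elim (fun j => max (r j) 0) (fun j => max (-(r j)) 0)), ?_, ?_⟩
      · rintro (i | j | j)
        · by_cases hi : α i
          · simpa [hσ, hi] using (ho i).1 hi
          · have := (ho i).2 (by simpa using hi)
            simp only [Sum.elim_inl, hσ, if_neg hi]
            nlinarith
        · exact le_max_right _ _
        · exact le_max_right _ _
      · rw [Fintype.sum_sum_type, Fintype.sum_sum_type]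
        have h1 : ∑ i : Fin n, (σ i * o i) • w (Sum.inl i) = o := by
          ext k
          have : (∑ i : Fin n, (σ i * o i) • w (Sum.inl i)) k
              = ∑ i : Fin n, ((σ i * o i) • w (Sum.inl i)) k := by
            rw [WithLp.ofLp_sum]; exact Finset.sum_apply k Finset.univ _
          rw [this, Finset.sum_eq_single k]
          · by_cases hα : α k <;> simp [hw, EuclideanSpace.single_apply, hσ, hα]
          · intro i _ hik
            simp [hw, EuclideanSpace.single_apply, Ne.symm hik]
          · simp
        have h2 : (∑ j : Fin m, (max (r j) 0) • w (Sum.inr (Sum.inl j)))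
            + ∑ j : Fin m, (max (-(r j)) 0) • w (Sum.inr (Sum.inr j)) = u := by
          simp only [hw, Sum.elim_inr, Sum.elim_inl, smul_neg]
          rw [← Finset.sum_add_distrib]
          have key : ∀ j : Fin m, (max (r j) 0) • (b j : EuclideanSpace ℝ (Fin n))
              + -((max (-(r j)) 0) • (b j : EuclideanSpace ℝ (Fin n)))
              = r j • (b j : EuclideanSpace ℝ (Fin n)) := by
            intro j
            rw [← neg_smul, ← add_smul]
            congr 1
            rcases le_total (r j) 0 with hj | hj
            · simp [max_eq_right hj, max_eq_left (neg_nonneg.mpr hj)]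
            · simp [max_eq_left hj, max_eq_right (neg_nonpos.mpr hj)]
          rw [Finset.sum_congr rfl fun j _ => key j]
          have hrep := b.sum_repr ⟨u, hu⟩
          calc ∑ j : Fin m, r j • (b j : EuclideanSpace ℝ (Fin n))
              = ((∑ j : Fin m, r j • b j : V) : EuclideanSpace ℝ (Fin n)) := by
                push_cast; rfl
            _ = u := by rw [hrep]
        simp only [Sum.elim_inl, Sum.elim_inr]
        rw [h1, h2]
    · rintro ⟨c, hc, rfl⟩
      rw [Fintype.sum_sum_type, Fintype.sum_sum_type]
      refine ⟨∑ i : Fin n, c (Sum.inl i) • w (Sum.inl i), ?_, _, ?_, rfl⟩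
      · -- sum of orthant elements is in the orthant
        refine Finset.sum_induction _ (fun z => z ∈ orthant α) horth_add horth0 ?_
        intro i _
        simp only [hw, Sum.elim_inl]
        exact horth_smul _ _ (hc (Sum.inl i)) (hsingle_mem i)
      · refine V.add_mem (V.sum_mem ?_) (V.sum_mem ?_) <;> intro j _
        · simp only [hw, Sum.elim_inr, Sum.elim_inl]
          exact V.smul_mem _ (b j).2
        · simp only [hw, Sum.elim_inr, smul_neg]
          exact V.neg_mem (V.smul_mem _ (b j).2)
  have hCclosed : IsClosed C := hCcone ▸ isClosed_coneOn w Finset.univ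
  have hCne : C.Nonempty := ⟨0, 0, horth0, 0, V.zero_mem, by simp⟩
  have htC : t ∉ K := by
    rintro ⟨o, ho, u, hu, htou⟩
    have : o ∈ chamber V t α :=
      ⟨⟨-u, V.neg_mem hu, by show t + -u = o; rw [htou]; exact add_neg_cancel_right o u⟩, ho⟩
    rw [h] at this
    exact this
  obtain ⟨y, hy1, hy2⟩ :=
    ProperCone.hyperplane_separation' (⟨K.toPointedCone
      (ConvexCone.Pointed.of_nonempty_of_isClosed hCne hCclosed), hCclosed⟩ :
      ProperCone ℝ (EuclideanSpace ℝ (Fin n))) htC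
  refine ⟨y, ⟨?_, ?_⟩, ?_⟩
  · -- y ∈ Vᗮ
    rw [SetLike.mem_coe, Submodule.mem_orthogonal]
    intro u hu
    have hp : (0 : ℝ) ≤ ⟪u, y⟫ := hy1 u ⟨0, horth0, u, hu, by simp⟩
    have hn : (0 : ℝ) ≤ ⟪-u, y⟫ := hy1 (-u) ⟨0, horth0, -u, V.neg_mem hu, by simp⟩
    rw [inner_neg_left] at hn
    linarith
  · -- y ∈ orthant α
    intro i
    have hmem : (EuclideanSpace.single i (σ i) : EuclideanSpace ℝ (Fin n)) ∈ K :=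
      ⟨_, hsingle_mem i, 0, V.zero_mem, by simp⟩
    have := hy1 _ hmem
    rw [EuclideanSpace.inner_single_left] at this
    simp only [map_one, RCLike.conj_to_real] at this
    constructor <;> intro hi
    · simpa [hσ, hi] using this
    · rw [hσ] at this; simp only [hi, Bool.false_eq_true, if_false] at this
      nlinarith [this]
  · exact hy2
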